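/- Let Q be a quotient module of H²(𝔻ⁿ) (n ≥ 2). If Q is doubly commuting, i.e., C_{z_i} C_{z_j}^* = C_{z_j}^* C_{z_i} for all i ≠ j where C_{z_i} = P_Q M_{z_i}|_Q, then there exist quotient modules Q_1, ..., Q_n of H²(𝔻) such that Q = Q_1 ⊗ ... ⊗ Q_n. -/

import Mathlib

open ContinuousLinearMap
open scoped InnerProductSpace

namespace DCQM

noncomputable section

variable {n : ℕ}

local notation "H" => lp (fun _ : Fin n → ℕ => ℂ) 2
local notation "L2" => lp (fun _ : ℕ => ℂ) 2

lemma coord_inner {ι : Type*} [DecidableEq ι] (f : lp (fun _ : ι => ℂ) 2) (k : ι) :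
    ⟪lp.single 2 k (1 : ℂ), f⟫_ℂ = f k := by
  rw [lp.inner_single_left]
  simp [RCLike.inner_apply]

lemma adjoint_coord {ι κ : Type*} [DecidableEq ι] [DecidableEq κ]
    (T : lp (fun _ : ι => ℂ) 2 →L[ℂ] lp (fun _ : κ => ℂ) 2)
    (f : lp (fun _ : κ => ℂ) 2) (k : ι) :
    (ContinuousLinearMap.adjoint T f) k = ⟪T (lp.single 2 k (1 : ℂ)), f⟫_ℂ := by
  rw [← coord_inner (ContinuousLinearMap.adjoint T f) k]
  rw [ContinuousLinearMap.adjoint_inner_right]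

lemma single_apply' {ι : Type*} [DecidableEq ι] (k l : ι) (c : ℂ) :
    (lp.single 2 k c : lp (fun _ : ι => ℂ) 2) l = if l = k then c else 0 := by
  by_cases h : l = k
  · subst h; rw [if_pos rfl, lp.single_apply_self]
  · rw [if_neg h, lp.single_apply_ne _ _ _ h]

lemma two_toReal_pos : 0 < (2 : ENNReal).toReal := by norm_num

lemma update_injective (g : Fin n → ℕ) (j : Fin n) :
    Function.Injective (fun a => Function.update g j a) := by
  intro a b hab
  have := congrFun hab j
  simpa using this

/-- the `j`-th slice of `f` through the point `g`. -/
def slice (j : Fin n) (g : Fin n → ℕ) (f : lp (fun _ : Fin n → ℕ => ℂ) 2) :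
    lp (fun _ : ℕ => ℂ) 2 :=
  ⟨fun a => f (Function.update g j a), by
    apply memℓp_gen
    exact ((memℓp_gen_iff two_toReal_pos).mp (lp.memℓp f)).comp_injective
      (update_injective g j)⟩

@[simp] lemma slice_apply (j : Fin n) (g : Fin n → ℕ) (f : lp (fun _ : Fin n → ℕ => ℂ) 2)
    (a : ℕ) : slice j g f a = f (Function.update g j a) := rfl

lemma slice_sub (j : Fin n) (g : Fin n → ℕ) (f₁ f₂ : lp (fun _ : Fin n → ℕ => ℂ) 2) :
    slice j g (f₁ - f₂) = slice j g f₁ - slice j g f₂ := by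
  apply lp.ext
  funext a
  simp only [lp.coeFn_sub, Pi.sub_apply, slice_apply]

section shifts

variable (S : Fin n → ((lp (fun _ : Fin n → ℕ => ℂ) 2) →L[ℂ] (lp (fun _ : Fin n → ℕ => ℂ) 2)))
variable (hS : ∀ (i : Fin n) (k : Fin n → ℕ),
      S i (lp.single 2 k (1 : ℂ)) = lp.single 2 (k + Pi.single i 1) (1 : ℂ))

include hS

lemma Sadj_coord (i : Fin n) (f : H) (k : Fin n → ℕ) :
    (ContinuousLinearMap.adjoint (S i) f) k = f (k + Pi.single i 1) := by
  rw [adjoint_coord, hS, coord_inner]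

lemma Sadj_single (i : Fin n) (k : Fin n → ℕ) :
    ContinuousLinearMap.adjoint (S i) (lp.single 2 k (1:ℂ)) =
      if k i = 0 then 0 else lp.single 2 (Function.update k i (k i - 1)) (1:ℂ) := by
  apply lp.ext
  funext l
  rw [Sadj_coord S hS]
  by_cases h : k i = 0
  · rw [if_pos h]
    rw [single_apply']
    rw [if_neg ?_]
    · rfl
    · intro hlk
      apply congrFun at hlk
      have := hlk i
      simp [Pi.single_apply] at this
      omega
  · rw [if_neg h]
    rw [single_apply', single_apply']
    by_cases hl : l = Function.update k i (k i - 1)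
    · rw [if_pos ?_, if_pos hl]
      funext m
      subst hl
      by_cases hm : m = i
      · subst hm; simp [Function.update_self, Pi.single_apply]; omega
      · simp [Function.update_of_ne hm, Pi.single_apply, hm]
    · rw [if_neg ?_, if_neg hl]
      intro hc
      apply hl
      funext m
      apply congrFun at hc
      have := hc m
      by_cases hm : m = i
      · subst hm
        simp [Pi.single_apply] at this
        simp [Function.update_self]
        omega
      · simp [Pi.single_apply, hm] at this
        simp [Function.update_of_ne hm, this]

lemma S_coord (i : Fin n) (x : H) (k : Fin n → ℕ) :
    (S i x) k = if k i = 0 then 0 else x (Function.update k i (k i - 1)) := by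
  have h1 : (S i x) k = ⟪ContinuousLinearMap.adjoint (S i) (lp.single 2 k (1:ℂ)), x⟫_ℂ := by
    rw [ContinuousLinearMap.adjoint_inner_left, coord_inner]
  rw [h1, Sadj_single S hS]
  by_cases h : k i = 0
  · simp [h]
  · rw [if_neg h, if_neg h, coord_inner]

lemma Spow_coord (i : Fin n) (m : ℕ) (x : H) (k : Fin n → ℕ) :
    (((S i) ^ m) x) k = if k i < m then 0 else x (Function.update k i (k i - m)) := by
  induction m generalizing k with
  | zero =>
    simp only [pow_zero, ContinuousLinearMap.one_apply, Nat.not_lt_zero, if_false]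
    rw [Nat.sub_zero, Function.update_eq_self]
  | succ m ih =>
    rw [pow_succ', ContinuousLinearMap.mul_apply, S_coord S hS]
    by_cases h : k i = 0
    · rw [if_pos h, if_pos (by omega)]
    · rw [if_neg h, ih]
      rw [Function.update_self, Function.update_idem]
      by_cases h2 : k i < m + 1
      · rw [if_pos (by omega), if_pos h2]
      · rw [if_neg (by omega), if_neg h2]
        have h3 : k i - 1 - m = k i - (m + 1) := by omega
        rw [h3]

lemma Sadj_comm (i j : Fin n) (hij : i ≠ j) (x : H) :
    ContinuousLinearMap.adjoint (S i) (S j x) = S j (ContinuousLinearMap.adjoint (S i) x) := by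
  apply lp.ext
  funext k
  rw [Sadj_coord S hS, S_coord S hS, S_coord S hS]
  simp only [Pi.add_apply, Pi.single_eq_of_ne (Ne.symm hij), add_zero]
  by_cases h : k j = 0
  · rw [if_pos h, if_pos h]
  · rw [if_neg h, if_neg h, Sadj_coord S hS]
    have harg : Function.update (k + Pi.single i 1) j (k j - 1)
        = Function.update k j (k j - 1) + Pi.single i 1 := by
      funext l
      by_cases hl : l = j
      · subst hl
        simp [Function.update_self, Pi.single_eq_of_ne (Ne.symm hij)]
      · simp [Function.update_of_ne hl, Pi.add_apply]
    rw [harg]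

end shifts

section sops

variable (s : (lp (fun _ : ℕ => ℂ) 2) →L[ℂ] (lp (fun _ : ℕ => ℂ) 2))
variable (hs : ∀ a : ℕ, s (lp.single 2 a (1 : ℂ)) = lp.single 2 (a + 1) (1 : ℂ))

include hs

lemma sadj_coord (h : L2) (a : ℕ) :
    (ContinuousLinearMap.adjoint s h) a = h (a + 1) := by
  rw [adjoint_coord, hs, coord_inner]

end sops


section wel

/-- the element of `H` supported on `{k | ∀ i ∈ s, k i = g' i}` whose value there is
`r` evaluated with the `s`-coordinates zeroed out. -/
def Wel (sF : Finset (Fin n)) (g' : Fin n → ℕ) (r : lp (fun _ : Fin n → ℕ => ℂ) 2) :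
    lp (fun _ : Fin n → ℕ => ℂ) 2 :=
  ⟨fun k => if ∀ i ∈ sF, k i = g' i then r (fun i => if i ∈ sF then 0 else k i) else 0, by
    apply memℓp_gen
    set F : (Fin n → ℕ) → ℝ := fun k =>
      ‖if ∀ i ∈ sF, k i = g' i then r (fun i => if i ∈ sF then 0 else k i) else (0:ℂ)‖
        ^ (2:ENNReal).toReal with hF
    show Summable F
    set Ψ : {m : Fin n → ℕ // ∀ i ∈ sF, m i = 0} → (Fin n → ℕ) :=
      fun m => fun l => if l ∈ sF then g' l else (m : Fin n → ℕ) l with hΨ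
    have hinj : Function.Injective Ψ := by
      intro a b hab
      apply Subtype.ext
      funext l
      by_cases hl : l ∈ sF
      · rw [a.2 l hl, b.2 l hl]
      · have := congrFun hab l
        simpa [hΨ, hl] using this
    have hsupp : ∀ k ∉ Set.range Ψ, F k = 0 := by
      intro k hk
      rw [hF]
      simp only
      rw [if_neg, norm_zero, Real.zero_rpow (by norm_num)]
      intro hcond
      exact hk ⟨⟨fun l => if l ∈ sF then 0 else k l, by intro i hi; simp [hi]⟩, by
        funext l
        by_cases hl : l ∈ sF
        · simp [hΨ, hl, (hcond l hl).symm]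
        · simp [hΨ, hl]⟩
    rw [← Function.Injective.summable_iff hinj hsupp]
    have hcongr : ∀ m : {m : Fin n → ℕ // ∀ i ∈ sF, m i = 0},
        (F ∘ Ψ) m = ‖r (m : Fin n → ℕ)‖ ^ (2:ENNReal).toReal := by
      intro m
      have hcond : ∀ i ∈ sF, Ψ m i = g' i := by intro i hi; simp [hΨ, hi]
      have harg : (fun i => if i ∈ sF then 0 else Ψ m i) = (m : Fin n → ℕ) := by
        funext i
        by_cases hi : i ∈ sF
        · simp [hΨ, hi, (m.2 i hi).symm]
        · simp [hΨ, hi]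
      simp only [Function.comp_apply, hF]
      rw [if_pos hcond, harg]
    rw [funext hcongr]
    exact ((memℓp_gen_iff two_toReal_pos).mp (lp.memℓp r)).comp_injective Subtype.coe_injective⟩

@[simp] lemma Wel_apply (sF : Finset (Fin n)) (g' : Fin n → ℕ)
    (r : lp (fun _ : Fin n → ℕ => ℂ) 2) (k : Fin n → ℕ) :
    Wel sF g' r k =
      if ∀ i ∈ sF, k i = g' i then r (fun i => if i ∈ sF then 0 else k i) else 0 := rfl

lemma Wel_empty (g' : Fin n → ℕ) (r : lp (fun _ : Fin n → ℕ => ℂ) 2) :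
    Wel ∅ g' r = r := by
  apply lp.ext
  funext k
  rw [Wel_apply, if_pos (by simp)]
  congr 1

end wel

section welrec

variable (S : Fin n → ((lp (fun _ : Fin n → ℕ => ℂ) 2) →L[ℂ] (lp (fun _ : Fin n → ℕ => ℂ) 2)))
variable (hS : ∀ (i : Fin n) (k : Fin n → ℕ),
      S i (lp.single 2 k (1 : ℂ)) = lp.single 2 (k + Pi.single i 1) (1 : ℂ))

include hS

lemma Wel_rec (i : Fin n) (sF : Finset (Fin n)) (his : i ∉ sF) (g' : Fin n → ℕ) (r : H) :
    Wel (insert i sF) g' r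
      = ((S i) ^ (g' i)) (Wel sF g' r)
        - ((S i) ^ (g' i + 1)) (Wel sF g' (ContinuousLinearMap.adjoint (S i) r)) := by
  apply lp.ext
  funext k
  simp only [lp.coeFn_sub, Pi.sub_apply]
  rw [Spow_coord S hS, Spow_coord S hS, Wel_apply]
  set τ : Fin n → ℕ := fun l => if l ∈ sF then 0 else k l with hτ
  have hupd : ∀ c : ℕ, (fun l => if l ∈ sF then (0:ℕ) else Function.update k i c l)
      = Function.update τ i c := by
    intro c; funext l
    by_cases hl : l ∈ sF
    · have hli : l ≠ i := fun h => his (h ▸ hl)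
      simp [hl, Function.update_of_ne hli, hτ]
    · by_cases hli : l = i
      · subst hli; simp [hl, Function.update_self]
      · simp [hl, Function.update_of_ne hli, hτ]
  have hcondupd : ∀ c : ℕ,
      (∀ l ∈ sF, Function.update k i c l = g' l) ↔ (∀ l ∈ sF, k l = g' l) := by
    intro c
    constructor <;> intro hc l hl <;> have hli : l ≠ i := fun h => his (h ▸ hl)
    · have := hc l hl; rwa [Function.update_of_ne hli] at this
    · rw [Function.update_of_ne hli]; exact hc l hl
  have hA : ∀ c : ℕ, Wel sF g' r (Function.update k i c)
      = if ∀ l ∈ sF, k l = g' l then r (Function.update τ i c) else 0 := by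
    intro c
    rw [Wel_apply]
    by_cases hcs' : ∀ l ∈ sF, k l = g' l
    · rw [if_pos ((hcondupd c).mpr hcs'), if_pos hcs', hupd c]
    · rw [if_neg (fun hc => hcs' ((hcondupd c).mp hc)), if_neg hcs']
  have hB : ∀ c : ℕ, Wel sF g' (ContinuousLinearMap.adjoint (S i) r) (Function.update k i c)
      = if ∀ l ∈ sF, k l = g' l then r (Function.update τ i (c + 1)) else 0 := by
    intro c
    rw [Wel_apply]
    by_cases hcs' : ∀ l ∈ sF, k l = g' l
    · rw [if_pos ((hcondupd c).mpr hcs'), if_pos hcs', hupd c, Sadj_coord S hS]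
      have harg : Function.update τ i c + Pi.single i 1 = Function.update τ i (c + 1) := by
        funext l
        by_cases hli : l = i
        · subst hli; simp [Function.update_self, Pi.single_eq_same]
        · simp [Function.update_of_ne hli, Pi.single_eq_of_ne hli]
      rw [harg]
    · rw [if_neg (fun hc => hcs' ((hcondupd c).mp hc)), if_neg hcs']
  rw [hA, hB]
  have hcondL : (∀ l ∈ insert i sF, k l = g' l) ↔ (k i = g' i ∧ ∀ l ∈ sF, k l = g' l) := by
    rw [Finset.forall_mem_insert]
  have hargL : (fun l => if l ∈ insert i sF then (0:ℕ) else k l) = Function.update τ i 0 := by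
    funext l
    by_cases hli : l = i
    · subst hli; simp [Finset.mem_insert_self, Function.update_self]
    · by_cases hl : l ∈ sF
      · simp [Finset.mem_insert, hl, hli, Function.update_of_ne hli, hτ]
      · simp [Finset.mem_insert, hl, hli, Function.update_of_ne hli, hτ]
  by_cases hcs : ∀ l ∈ sF, k l = g' l
  · rw [if_pos hcs, if_pos hcs]
    rcases Nat.lt_trichotomy (k i) (g' i) with hki | hki | hki
    · rw [if_neg (fun hc => absurd (hcondL.mp hc).1 (by omega : ¬ k i = g' i)),
        if_pos hki, if_pos (by omega), sub_zero]
    · rw [if_pos (hcondL.mpr ⟨hki, hcs⟩), hargL, if_neg (by omega), if_pos (by omega), sub_zero]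
      have : k i - g' i = 0 := by omega
      rw [this]
    · rw [if_neg (fun hc => by have := (hcondL.mp hc).1; omega),
        if_neg (by omega), if_neg (by omega)]
      have : k i - (g' i + 1) + 1 = k i - g' i := by omega
      rw [this, sub_self]
  · rw [if_neg (fun hc => hcs (hcondL.mp hc).2), if_neg hcs, if_neg hcs, ite_self, ite_self,
      sub_zero]

end welrec

section gen

variable (S : Fin n → ((lp (fun _ : Fin n → ℕ => ℂ) 2) →L[ℂ] (lp (fun _ : Fin n → ℕ => ℂ) 2)))
variable (𝒬 : Submodule ℂ (lp (fun _ : Fin n → ℕ => ℂ) 2))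

/-- vectors obtained from `𝒬` by applying shifts in directions other than `j`. -/
inductive GenJ (j : Fin n) : (lp (fun _ : Fin n → ℕ => ℂ) 2) → Prop
  | base (q : lp (fun _ : Fin n → ℕ => ℂ) 2) (hq : q ∈ 𝒬) : GenJ j q
  | step (i : Fin n) (hij : i ≠ j) (x : lp (fun _ : Fin n → ℕ => ℂ) 2) (hx : GenJ j x) :
      GenJ j (S i x)

lemma shift_mem_span (j i : Fin n) (hij : i ≠ j) {x : lp (fun _ : Fin n → ℕ => ℂ) 2}
    (hx : x ∈ Submodule.span ℂ {y | GenJ S 𝒬 j y}) :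
    S i x ∈ Submodule.span ℂ {y | GenJ S 𝒬 j y} := by
  induction hx using Submodule.span_induction with
  | mem y hy => exact Submodule.subset_span (GenJ.step i hij y hy)
  | zero => rw [map_zero]; exact Submodule.zero_mem _
  | add y z hy hz ihy ihz => rw [map_add]; exact Submodule.add_mem _ ihy ihz
  | smul a y hy ihy => rw [map_smul]; exact Submodule.smul_mem _ a ihy

lemma shiftpow_mem_span (j i : Fin n) (hij : i ≠ j) (m : ℕ)
    {x : lp (fun _ : Fin n → ℕ => ℂ) 2}
    (hx : x ∈ Submodule.span ℂ {y | GenJ S 𝒬 j y}) :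
    ((S i) ^ m) x ∈ Submodule.span ℂ {y | GenJ S 𝒬 j y} := by
  induction m with
  | zero => simpa using hx
  | succ m ih =>
    rw [pow_succ', ContinuousLinearMap.mul_apply]
    exact shift_mem_span S 𝒬 j i hij ih

lemma span_inner_zero (j : Fin n) (v : lp (fun _ : Fin n → ℕ => ℂ) 2)
    (hv : ∀ x, GenJ S 𝒬 j x → ⟪x, v⟫_ℂ = 0) :
    ∀ y ∈ Submodule.span ℂ {x | GenJ S 𝒬 j x}, ⟪y, v⟫_ℂ = 0 := by
  intro y hy
  induction hy using Submodule.span_induction with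
  | mem x hx => exact hv x hx
  | zero => simp
  | add x z hx hz ihx ihz => rw [inner_add_left, ihx, ihz, add_zero]
  | smul a x hx ihx => rw [inner_smul_left, ihx, mul_zero]

end gen

section genmem

variable (S : Fin n → ((lp (fun _ : Fin n → ℕ => ℂ) 2) →L[ℂ] (lp (fun _ : Fin n → ℕ => ℂ) 2)))
variable (hS : ∀ (i : Fin n) (k : Fin n → ℕ),
      S i (lp.single 2 k (1 : ℂ)) = lp.single 2 (k + Pi.single i 1) (1 : ℂ))
variable (𝒬 : Submodule ℂ (lp (fun _ : Fin n → ℕ => ℂ) 2))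
variable (h𝒬inv : ∀ i, ∀ x ∈ 𝒬, ContinuousLinearMap.adjoint (S i) x ∈ 𝒬)

include hS h𝒬inv

lemma Wel_mem_span (j : Fin n) (sF : Finset (Fin n)) (hjs : j ∉ sF) :
    ∀ (g' : Fin n → ℕ) (r : H), r ∈ 𝒬 →
      Wel sF g' r ∈ Submodule.span ℂ {y | GenJ S 𝒬 j y} := by
  induction sF using Finset.induction_on with
  | empty =>
    intro g' r hr
    rw [Wel_empty]
    exact Submodule.subset_span (GenJ.base r hr)
  | @insert i sF his ih =>
    intro g' r hr
    have hij : i ≠ j := fun h => hjs (h ▸ Finset.mem_insert_self i sF)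
    have hjs' : j ∉ sF := fun h => hjs (Finset.mem_insert_of_mem h)
    rw [Wel_rec S hS i sF his g' r]
    apply Submodule.sub_mem
    · exact shiftpow_mem_span S 𝒬 j i hij _ (ih hjs' g' r hr)
    · exact shiftpow_mem_span S 𝒬 j i hij _
        (ih hjs' g' (ContinuousLinearMap.adjoint (S i) r) (h𝒬inv i r hr))

lemma slice_strip (j : Fin n) :
    ∀ (m : ℕ) (γ : Fin n → ℕ) (r : H), r ∈ 𝒬 →
      (∑ i ∈ Finset.univ.erase j, γ i) = m →
      ∃ r' ∈ 𝒬, slice j γ r = slice j (fun _ => 0) r' := by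
  intro m
  induction m with
  | zero =>
    intro γ r hr hsum
    refine ⟨r, hr, ?_⟩
    apply lp.ext
    funext a
    simp only [slice_apply]
    have harg : Function.update γ j a = Function.update (fun _ => 0) j a := by
      funext l
      by_cases hl : l = j
      · subst hl; simp [Function.update_self]
      · have hl0 : γ l = 0 := by
          have := Finset.sum_eq_zero_iff.mp hsum l (Finset.mem_erase.mpr ⟨hl, Finset.mem_univ l⟩)
          exact this
        simp [Function.update_of_ne hl, hl0]
    rw [harg]
  | succ m ih =>
    intro γ r hr hsum
    have hex : ∃ i ∈ Finset.univ.erase j, γ i ≠ 0 := by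
      by_contra hno
      push_neg at hno
      rw [Finset.sum_eq_zero hno] at hsum
      omega
    obtain ⟨i, hi, hγi⟩ := hex
    have hij : i ≠ j := (Finset.mem_erase.mp hi).1
    set γ' := Function.update γ i (γ i - 1) with hγ'
    have heq : slice j γ r = slice j γ' (ContinuousLinearMap.adjoint (S i) r) := by
      apply lp.ext
      funext a
      simp only [slice_apply]
      rw [Sadj_coord S hS]
      have harg : Function.update γ' j a + Pi.single i 1 = Function.update γ j a := by
        funext l
        by_cases hl : l = j
        · subst hl
          simp [Function.update_self, Pi.single_eq_of_ne (Ne.symm hij)]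
        · rw [Pi.add_apply, Function.update_of_ne hl, Function.update_of_ne hl]
          by_cases hli : l = i
          · subst hli
            rw [hγ', Function.update_self, Pi.single_eq_same]
            omega
          · rw [hγ', Function.update_of_ne hli, Pi.single_eq_of_ne hli, add_zero]
      rw [harg]
    have hsum' : (∑ l ∈ Finset.univ.erase j, γ' l) = m := by
      have h1 : (∑ l ∈ Finset.univ.erase j, γ' l)
          = (γ i - 1) + ∑ l ∈ (Finset.univ.erase j).erase i, γ l := by
        rw [hγ', Finset.sum_update_of_mem hi, ← Finset.erase_eq]
      have h2 : γ i + ∑ l ∈ (Finset.univ.erase j).erase i, γ l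
          = ∑ l ∈ Finset.univ.erase j, γ l := Finset.add_sum_erase _ _ hi
      omega
    obtain ⟨r', hr', heq2⟩ := ih γ' (ContinuousLinearMap.adjoint (S i) r) (h𝒬inv i r hr) hsum'
    exact ⟨r', hr', heq.trans heq2⟩

end genmem

section pairing

lemma W_pair (j : Fin n) (g' : Fin n → ℕ) (r v : lp (fun _ : Fin n → ℕ => ℂ) 2) :
    ⟪Wel (Finset.univ.erase j) g' r, v⟫_ℂ = ⟪slice j (fun _ => 0) r, slice j g' v⟫_ℂ := by
  rw [lp.inner_eq_tsum, lp.inner_eq_tsum]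
  rw [← Function.Injective.tsum_eq
      (f := fun k => ⟪Wel (Finset.univ.erase j) g' r k, v k⟫_ℂ)
      (update_injective g' j) ?_]
  · apply tsum_congr
    intro a
    have h1 : Wel (Finset.univ.erase j) g' r (Function.update g' j a)
        = slice j (fun _ => 0) r a := by
      rw [Wel_apply, if_pos ?_]
      · rw [slice_apply]
        have harg : (fun l => if l ∈ Finset.univ.erase j then 0 else Function.update g' j a l)
            = Function.update (fun _ => 0) j a := by
          funext l
          by_cases hl : l = j
          · subst hl
            simp [Finset.notMem_erase, Function.update_self]
          · simp [Finset.mem_erase, hl, Function.update_of_ne hl]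
        rw [harg]
      · intro l hl
        have hlj : l ≠ j := (Finset.mem_erase.mp hl).1
        rw [Function.update_of_ne hlj]
    rw [h1]
    rfl
  · rw [Function.support_subset_iff']
    intro k hk
    have h0 : Wel (Finset.univ.erase j) g' r k = 0 := by
      rw [Wel_apply, if_neg]
      intro hcond
      apply hk
      refine ⟨k j, ?_⟩
      show Function.update g' j (k j) = k
      funext l
      by_cases hl : l = j
      · subst hl; rw [Function.update_self]
      · rw [Function.update_of_ne hl]
        exact (hcond l (Finset.mem_erase.mpr ⟨hl, Finset.mem_univ l⟩)).symm
    simp only [h0, inner_zero_left]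

def lineEquiv (j : Fin n) : ({h : Fin n → ℕ // h j = 0} × ℕ) ≃ (Fin n → ℕ) where
  toFun := fun p => Function.update (p.1 : Fin n → ℕ) j p.2
  invFun := fun k => (⟨Function.update k j 0, by simp⟩, k j)
  left_inv := by
    rintro ⟨⟨g', hg'⟩, a⟩
    have h1 : Function.update (Function.update g' j a) j 0 = g' := by
      rw [Function.update_idem]
      conv_rhs => rw [← Function.update_eq_self j g']
      rw [hg']
    simp only [Function.update_self]
    exact Prod.ext (Subtype.ext h1) rfl
  right_inv := by
    intro k
    simp only [Function.update_idem]
    exact Function.update_eq_self j k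

lemma parseval_slices (j : Fin n) (x v : lp (fun _ : Fin n → ℕ => ℂ) 2) :
    ⟪x, v⟫_ℂ = ∑' g' : {h : Fin n → ℕ // h j = 0},
      ⟪slice j (g' : Fin n → ℕ) x, slice j (g' : Fin n → ℕ) v⟫_ℂ := by
  have hsum : Summable
      (fun p : {h : Fin n → ℕ // h j = 0} × ℕ => ⟪x (lineEquiv j p) , v (lineEquiv j p)⟫_ℂ) :=
    (Equiv.summable_iff (f := fun k => ⟪x k, v k⟫_ℂ) (lineEquiv j)).mpr (lp.summable_inner x v)
  have hfib : ∀ g' : {h : Fin n → ℕ // h j = 0},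
      Summable (fun a : ℕ => ⟪x (lineEquiv j (g', a)), v (lineEquiv j (g', a))⟫_ℂ) := by
    intro g'
    exact lp.summable_inner (slice j (g' : Fin n → ℕ) x) (slice j (g' : Fin n → ℕ) v)
  rw [lp.inner_eq_tsum]
  rw [← Equiv.tsum_eq (lineEquiv j) (fun k => ⟪x k, v k⟫_ℂ)]
  rw [Summable.tsum_prod' hsum hfib]
  apply tsum_congr
  intro g'
  rw [lp.inner_eq_tsum]
  rfl

end pairing

section qj

variable (𝒬 : Submodule ℂ (lp (fun _ : Fin n → ℕ => ℂ) 2))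

/-- generating slices for the one-variable quotient module in direction `j`. -/
def SliceSet (j : Fin n) : Set (lp (fun _ : ℕ => ℂ) 2) :=
  {h | ∃ r ∈ 𝒬, ∃ γ : Fin n → ℕ, h = slice j γ r}

/-- the one-variable quotient module in direction `j`. -/
def QJ (j : Fin n) : Submodule ℂ (lp (fun _ : ℕ => ℂ) 2) :=
  (Submodule.span ℂ (SliceSet 𝒬 j)).topologicalClosure

lemma QJ_isClosed (j : Fin n) : IsClosed ((QJ 𝒬 j : Submodule ℂ (lp (fun _ : ℕ => ℂ) 2)) :
    Set (lp (fun _ : ℕ => ℂ) 2)) :=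
  Submodule.isClosed_topologicalClosure _

lemma slice_mem_QJ (j : Fin n) (γ : Fin n → ℕ) (r : lp (fun _ : Fin n → ℕ => ℂ) 2)
    (hr : r ∈ 𝒬) : slice j γ r ∈ QJ 𝒬 j :=
  Submodule.le_topologicalClosure _ (Submodule.subset_span ⟨r, hr, γ, rfl⟩)

end qj

section qjinv

variable (s : (lp (fun _ : ℕ => ℂ) 2) →L[ℂ] (lp (fun _ : ℕ => ℂ) 2))
variable (hs : ∀ a : ℕ, s (lp.single 2 a (1 : ℂ)) = lp.single 2 (a + 1) (1 : ℂ))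
variable (S : Fin n → ((lp (fun _ : Fin n → ℕ => ℂ) 2) →L[ℂ] (lp (fun _ : Fin n → ℕ => ℂ) 2)))
variable (hS : ∀ (i : Fin n) (k : Fin n → ℕ),
      S i (lp.single 2 k (1 : ℂ)) = lp.single 2 (k + Pi.single i 1) (1 : ℂ))
variable (𝒬 : Submodule ℂ (lp (fun _ : Fin n → ℕ => ℂ) 2))
variable (h𝒬inv : ∀ i, ∀ x ∈ 𝒬, ContinuousLinearMap.adjoint (S i) x ∈ 𝒬)

include hs hS

lemma sadj_slice (j : Fin n) (γ : Fin n → ℕ) (r : lp (fun _ : Fin n → ℕ => ℂ) 2) :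
    ContinuousLinearMap.adjoint s (slice j γ r)
      = slice j γ (ContinuousLinearMap.adjoint (S j) r) := by
  apply lp.ext
  funext a
  rw [sadj_coord s hs, slice_apply, slice_apply, Sadj_coord S hS]
  have harg : Function.update γ j (a + 1) = Function.update γ j a + Pi.single j 1 := by
    funext l
    by_cases hl : l = j
    · subst hl; simp [Function.update_self, Pi.single_eq_same]
    · simp [Function.update_of_ne hl, Pi.single_eq_of_ne hl]
  rw [harg]

include h𝒬inv

lemma QJ_inv (j : Fin n) : ∀ h ∈ QJ 𝒬 j, ContinuousLinearMap.adjoint s h ∈ QJ 𝒬 j := by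
  intro h hh
  have hsub : QJ 𝒬 j ≤ Submodule.comap
      ((ContinuousLinearMap.adjoint s) : (lp (fun _ : ℕ => ℂ) 2) →ₗ[ℂ] (lp (fun _ : ℕ => ℂ) 2))
      (QJ 𝒬 j) := by
    apply Submodule.topologicalClosure_minimal
    · rw [Submodule.span_le]
      rintro y ⟨r, hr, γ, rfl⟩
      show ContinuousLinearMap.adjoint s (slice j γ r) ∈ QJ 𝒬 j
      rw [sadj_slice s hs S hS]
      exact slice_mem_QJ 𝒬 j γ _ (h𝒬inv j r hr)
    · have : (Submodule.comap
          ((ContinuousLinearMap.adjoint s) : (lp (fun _ : ℕ => ℂ) 2) →ₗ[ℂ] (lp (fun _ : ℕ => ℂ) 2))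
          (QJ 𝒬 j) : Set (lp (fun _ : ℕ => ℂ) 2))
          = (ContinuousLinearMap.adjoint s) ⁻¹' (QJ 𝒬 j : Set (lp (fun _ : ℕ => ℂ) 2)) := rfl
      rw [this]
      exact (QJ_isClosed 𝒬 j).preimage (ContinuousLinearMap.adjoint s).continuous
  exact hsub hh

end qjinv



section core

variable (s : (lp (fun _ : ℕ => ℂ) 2) →L[ℂ] (lp (fun _ : ℕ => ℂ) 2))
variable (hs : ∀ a : ℕ, s (lp.single 2 a (1 : ℂ)) = lp.single 2 (a + 1) (1 : ℂ))
variable (S : Fin n → ((lp (fun _ : Fin n → ℕ => ℂ) 2) →L[ℂ] (lp (fun _ : Fin n → ℕ => ℂ) 2)))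
variable (hS : ∀ (i : Fin n) (k : Fin n → ℕ),
      S i (lp.single 2 k (1 : ℂ)) = lp.single 2 (k + Pi.single i 1) (1 : ℂ))
variable (𝒬 : Submodule ℂ (lp (fun _ : Fin n → ℕ => ℂ) 2))
variable (h𝒬inv : ∀ i, ∀ x ∈ 𝒬, ContinuousLinearMap.adjoint (S i) x ∈ 𝒬)
variable (PQ : lp (fun _ : Fin n → ℕ => ℂ) 2 →L[ℂ] lp (fun _ : Fin n → ℕ => ℂ) 2)
variable (hPQsa : IsSelfAdjoint PQ) (hPQidem : PQ ∘L PQ = PQ)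
variable (hPQrange : Set.range PQ = (𝒬 : Set (lp (fun _ : Fin n → ℕ => ℂ) 2)))
variable (hdc : ∀ i j, i ≠ j →
      (PQ ∘L S i ∘L PQ) ∘L ContinuousLinearMap.adjoint (PQ ∘L S j ∘L PQ)
        = ContinuousLinearMap.adjoint (PQ ∘L S j ∘L PQ) ∘L (PQ ∘L S i ∘L PQ))

section plem
include hPQidem hPQrange

lemma P_fix {q : lp (fun _ : Fin n → ℕ => ℂ) 2} (hq : q ∈ 𝒬) : PQ q = q := by
  have hmem : q ∈ Set.range PQ := by rw [hPQrange]; exact hq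
  obtain ⟨y, hy⟩ := hmem
  have h2 := ContinuousLinearMap.ext_iff.mp hPQidem y
  rw [ContinuousLinearMap.comp_apply] at h2
  rw [← hy]
  exact h2

end plem

include hPQrange in
lemma P_mem (x : lp (fun _ : Fin n → ℕ => ℂ) 2) : PQ x ∈ 𝒬 := by
  have : PQ x ∈ Set.range PQ := ⟨x, rfl⟩
  rwa [hPQrange] at this

include hPQsa in
lemma P_adj : ContinuousLinearMap.adjoint PQ = PQ := by
  rw [← ContinuousLinearMap.star_eq_adjoint]
  exact hPQsa

include hPQsa hPQidem hPQrange hdc h𝒬inv in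
lemma cross_comm (i j : Fin n) (hij : i ≠ j) {q : lp (fun _ : Fin n → ℕ => ℂ) 2} (hq : q ∈ 𝒬) :
    ContinuousLinearMap.adjoint (S i) (PQ (S j q))
      = PQ (S j (ContinuousLinearMap.adjoint (S i) q)) := by
  have hPP : ∀ x, PQ (PQ x) = PQ x := fun x => by
    have h2 := ContinuousLinearMap.ext_iff.mp hPQidem x
    rwa [ContinuousLinearMap.comp_apply] at h2
  have hadj : ContinuousLinearMap.adjoint (PQ ∘L S i ∘L PQ)
      = PQ ∘L (ContinuousLinearMap.adjoint (S i)) ∘L PQ := by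
    rw [ContinuousLinearMap.adjoint_comp, ContinuousLinearMap.adjoint_comp,
      P_adj (PQ := PQ) hPQsa]
    ext x
    simp [ContinuousLinearMap.comp_apply]
  have h := ContinuousLinearMap.ext_iff.mp (hdc j i (Ne.symm hij)) q
  rw [hadj] at h
  simp only [ContinuousLinearMap.comp_apply] at h
  rw [P_fix 𝒬 PQ hPQidem hPQrange hq] at h
  simp only [hPP] at h
  rw [P_fix 𝒬 PQ hPQidem hPQrange (h𝒬inv i q hq)] at h
  rw [P_fix 𝒬 PQ hPQidem hPQrange (h𝒬inv i _ (P_mem 𝒬 PQ hPQrange (S j q)))] at h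
  exact h.symm

include hS hPQsa hPQidem hPQrange hdc h𝒬inv in
lemma dagger (i j : Fin n) (hij : i ≠ j) {q : lp (fun _ : Fin n → ℕ => ℂ) 2} (hq : q ∈ 𝒬) :
    ContinuousLinearMap.adjoint (S i) (S j q - PQ (S j q))
      = S j (ContinuousLinearMap.adjoint (S i) q)
        - PQ (S j (ContinuousLinearMap.adjoint (S i) q)) := by
  rw [map_sub, Sadj_comm S hS i j hij,
    cross_comm S 𝒬 h𝒬inv PQ hPQsa hPQidem hPQrange hdc i j hij hq]

include hS hPQsa hPQidem hPQrange hdc h𝒬inv in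
lemma genJ_perp (j : Fin n) :
    ∀ x, GenJ S 𝒬 j x → ∀ q ∈ 𝒬, ⟪x, S j q - PQ (S j q)⟫_ℂ = 0 := by
  intro x hx
  induction hx with
  | base q' hq' =>
    intro q hq
    rw [inner_sub_right]
    have h1 : ⟪q', PQ (S j q)⟫_ℂ = ⟪q', S j q⟫_ℂ := by
      rw [← ContinuousLinearMap.adjoint_inner_left PQ (S j q) q',
        P_adj (PQ := PQ) hPQsa, P_fix 𝒬 PQ hPQidem hPQrange hq']
    rw [h1, sub_self]
  | step i hij x' hx' ih =>
    intro q hq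
    have h1 : ⟪S i x', S j q - PQ (S j q)⟫_ℂ
        = ⟪x', ContinuousLinearMap.adjoint (S i) (S j q - PQ (S j q))⟫_ℂ :=
      (ContinuousLinearMap.adjoint_inner_right (S i) x' _).symm
    rw [h1, dagger S hS 𝒬 h𝒬inv PQ hPQsa hPQidem hPQrange hdc i j hij hq]
    exact ih (ContinuousLinearMap.adjoint (S i) q) (h𝒬inv i q hq)

include hS h𝒬inv in
lemma slice_perp (j : Fin n) (v : lp (fun _ : Fin n → ℕ => ℂ) 2)
    (hv : ∀ x, GenJ S 𝒬 j x → ⟪x, v⟫_ℂ = 0) (g' : Fin n → ℕ) :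
    ∀ h ∈ QJ 𝒬 j, ⟪h, slice j g' v⟫_ℂ = 0 := by
  intro h hh
  have hspan : ∀ y ∈ Submodule.span ℂ (SliceSet 𝒬 j), ⟪y, slice j g' v⟫_ℂ = 0 := by
    intro y hy
    induction hy using Submodule.span_induction with
    | mem z hz =>
      obtain ⟨r, hr, γ, rfl⟩ := hz
      obtain ⟨r', hr', heq⟩ :=
        slice_strip S hS 𝒬 h𝒬inv j (∑ i ∈ Finset.univ.erase j, γ i) γ r hr rfl
      rw [heq, ← W_pair j g' r' v]
      exact span_inner_zero S 𝒬 j v hv _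
        (Wel_mem_span S hS 𝒬 h𝒬inv j _ (Finset.notMem_erase j _) g' r' hr')
    | zero => simp
    | add y z hy hz ihy ihz => rw [inner_add_left, ihy, ihz, add_zero]
    | smul a y hy ihy => rw [inner_smul_left, ihy, mul_zero]
  have hsubset : (QJ 𝒬 j : Set (lp (fun _ : ℕ => ℂ) 2))
      ⊆ {y : lp (fun _ : ℕ => ℂ) 2 | ⟪y, slice j g' v⟫_ℂ = 0} := by
    rw [QJ, Submodule.topologicalClosure_coe]
    apply closure_minimal
    · intro y hy
      exact hspan y hy
    · exact isClosed_eq (Continuous.inner continuous_id continuous_const) continuous_const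
  exact hsubset hh

/-- the key invariant: orthogonal to `𝒬`, with all slices in the corresponding `QJ`. -/
def Good (x : lp (fun _ : Fin n → ℕ => ℂ) 2) : Prop :=
  (∀ q ∈ 𝒬, ⟪q, x⟫_ℂ = 0) ∧ ∀ (j : Fin n) (g' : Fin n → ℕ), slice j g' x ∈ QJ 𝒬 j

include hs hS h𝒬inv hPQsa hPQidem hPQrange hdc in
lemma good_adj (x : lp (fun _ : Fin n → ℕ => ℂ) 2) (hx : Good 𝒬 x) (j : Fin n) :
    Good 𝒬 (ContinuousLinearMap.adjoint (S j) x) := by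
  constructor
  · intro q hq
    have h1 : ⟪q, ContinuousLinearMap.adjoint (S j) x⟫_ℂ = ⟪S j q, x⟫_ℂ :=
      ContinuousLinearMap.adjoint_inner_right (S j) q x
    rw [h1]
    have h2 : S j q = (S j q - PQ (S j q)) + PQ (S j q) := (sub_add_cancel _ _).symm
    rw [h2, inner_add_left]
    have h3 : ⟪PQ (S j q), x⟫_ℂ = 0 := hx.1 _ (P_mem 𝒬 PQ hPQrange _)
    have h4 : ⟪S j q - PQ (S j q), x⟫_ℂ = 0 := by
      rw [parseval_slices j (S j q - PQ (S j q)) x]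
      have hterm : ∀ g' : {h : Fin n → ℕ // h j = 0},
          ⟪slice j (g' : Fin n → ℕ) (S j q - PQ (S j q)),
            slice j (g' : Fin n → ℕ) x⟫_ℂ = 0 := by
        intro g'
        have h5 := slice_perp S hS 𝒬 h𝒬inv j (S j q - PQ (S j q))
          (fun x' hx' => genJ_perp S hS 𝒬 h𝒬inv PQ hPQsa hPQidem hPQrange hdc j x' hx' q hq)
          (g' : Fin n → ℕ) (slice j (g' : Fin n → ℕ) x) (hx.2 j (g' : Fin n → ℕ))
        rw [← inner_conj_symm (slice j (g' : Fin n → ℕ) (S j q - PQ (S j q)))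
          (slice j (g' : Fin n → ℕ) x), h5, map_zero]
      calc ∑' g' : {h : Fin n → ℕ // h j = 0},
          ⟪slice j (g' : Fin n → ℕ) (S j q - PQ (S j q)), slice j (g' : Fin n → ℕ) x⟫_ℂ
          = ∑' _g' : {h : Fin n → ℕ // h j = 0}, (0:ℂ) := tsum_congr hterm
        _ = 0 := tsum_zero
    rw [h3, h4, zero_add]
  · intro i g'
    by_cases hij : i = j
    · subst hij
      rw [← sadj_slice s hs S hS i g' x]
      exact QJ_inv s hs S hS 𝒬 h𝒬inv i _ (hx.2 i g')
    · have heq : slice i g' (ContinuousLinearMap.adjoint (S j) x)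
          = slice i (Function.update g' j (g' j + 1)) x := by
        apply lp.ext
        funext a
        rw [slice_apply, slice_apply, Sadj_coord S hS]
        have harg : Function.update g' i a + Pi.single j 1
            = Function.update (Function.update g' j (g' j + 1)) i a := by
          funext l
          by_cases hli : l = i
          · subst hli
            rw [Pi.add_apply, Function.update_self, Function.update_self,
              Pi.single_eq_of_ne hij, add_zero]
          · rw [Pi.add_apply, Function.update_of_ne hli, Function.update_of_ne hli]
            by_cases hlj : l = j
            · subst hlj
              rw [Function.update_self, Pi.single_eq_same]
            · rw [Function.update_of_ne hlj, Pi.single_eq_of_ne hlj, add_zero]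
        rw [harg]
      rw [heq]
      exact hx.2 i _

include hs hS h𝒬inv hPQsa hPQidem hPQrange hdc in
lemma good_perp (j : Fin n) :
    ∀ x, GenJ S 𝒬 j x → ∀ g, Good 𝒬 g → ⟪x, g⟫_ℂ = 0 := by
  intro x hx
  induction hx with
  | base q hq =>
    intro g hg
    exact hg.1 q hq
  | step i hij x' hx' ih =>
    intro g hg
    have h1 : ⟪S i x', g⟫_ℂ = ⟪x', ContinuousLinearMap.adjoint (S i) g⟫_ℂ :=
      (ContinuousLinearMap.adjoint_inner_right (S i) x' g).symm
    rw [h1]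
    exact ih _ (good_adj s hs S hS 𝒬 h𝒬inv PQ hPQsa hPQidem hPQrange hdc g hg i)

end core

end

end DCQM

open DCQM in
/-- Realize `H²(𝔻) ≅ ℓ²(ℕ)` with shift `s` and
`H²(𝔻ⁿ) ≅ ℓ²(ℕⁿ)` (`n ≥ 2`) with coordinate shifts `S i`.  Let `Q` be a quotient module of
`H²(𝔻ⁿ)` (closed, invariant under every `(S i)*`) with orthogonal projection `PQ`.  If `Q` is
doubly commuting, i.e. the compressions `A i = PQ ∘ S i ∘ PQ` satisfy
`A i (A j)* = (A j)* A i` for all `i ≠ j`, then there are quotient modules `Q₁, …, Qₙ` of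
`H²(𝔻)` with `Q = Q₁ ⊗ ⋯ ⊗ Qₙ`: `Q` is the set of `f` whose `i`-th variable slices lie in
`Q i` for every `i`. -/
theorem doubly_commuting_quotient_module_is_tensor
    {n : ℕ} (hn : 2 ≤ n)
    (s : lp (fun _ : ℕ => ℂ) 2 →L[ℂ] lp (fun _ : ℕ => ℂ) 2)
    (hs : ∀ a : ℕ, s (lp.single 2 a (1 : ℂ)) = lp.single 2 (a + 1) (1 : ℂ))
    (S : Fin n → (lp (fun _ : Fin n → ℕ => ℂ) 2 →L[ℂ] lp (fun _ : Fin n → ℕ => ℂ) 2))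
    (hS : ∀ (i : Fin n) (k : Fin n → ℕ),
      S i (lp.single 2 k (1 : ℂ)) = lp.single 2 (k + Pi.single i 1) (1 : ℂ))
    (𝒬 : Submodule ℂ (lp (fun _ : Fin n → ℕ => ℂ) 2))
    (h𝒬closed : IsClosed (𝒬 : Set (lp (fun _ : Fin n → ℕ => ℂ) 2)))
    (h𝒬inv : ∀ i, ∀ x ∈ 𝒬, ContinuousLinearMap.adjoint (S i) x ∈ 𝒬)
    (PQ : lp (fun _ : Fin n → ℕ => ℂ) 2 →L[ℂ] lp (fun _ : Fin n → ℕ => ℂ) 2)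
    (hPQsa : IsSelfAdjoint PQ) (hPQidem : PQ ∘L PQ = PQ)
    (hPQrange : Set.range PQ = (𝒬 : Set (lp (fun _ : Fin n → ℕ => ℂ) 2)))
    (hdc : ∀ i j, i ≠ j →
      (PQ ∘L S i ∘L PQ) ∘L ContinuousLinearMap.adjoint (PQ ∘L S j ∘L PQ)
        = ContinuousLinearMap.adjoint (PQ ∘L S j ∘L PQ) ∘L (PQ ∘L S i ∘L PQ)) :
    ∃ Q : Fin n → Submodule ℂ (lp (fun _ : ℕ => ℂ) 2),
      (∀ i, IsClosed (Q i : Set (lp (fun _ : ℕ => ℂ) 2))) ∧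
      (∀ i, ∀ x ∈ Q i, ContinuousLinearMap.adjoint s x ∈ Q i) ∧
      (𝒬 : Set (lp (fun _ : Fin n → ℕ => ℂ) 2)) =
        {f : lp (fun _ : Fin n → ℕ => ℂ) 2 | ∀ (i : Fin n) (g : Fin n → ℕ), ∃ q ∈ Q i,
          ∀ a : ℕ, (q : ∀ _ : ℕ, ℂ) a = (f : ∀ _ : Fin n → ℕ, ℂ) (Function.update g i a)} := by
  refine ⟨fun i => QJ 𝒬 i, fun i => QJ_isClosed 𝒬 i,
    fun i => QJ_inv s hs S hS 𝒬 h𝒬inv i, ?_⟩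
  ext f
  simp only [Set.mem_setOf_eq, SetLike.mem_coe]
  constructor
  · intro hf i g
    exact ⟨slice i g f, slice_mem_QJ 𝒬 i g f hf, fun a => rfl⟩
  · intro hf
    have hq : ∀ (i : Fin n) (g : Fin n → ℕ), slice i g f ∈ QJ 𝒬 i := by
      intro i g
      obtain ⟨q, hqm, hqa⟩ := hf i g
      have hqe : q = slice i g f := lp.ext (funext fun a => hqa a)
      exact hqe ▸ hqm
    set f' := f - PQ f with hf'
    have hgood : Good 𝒬 f' := by
      constructor
      · intro q hq'
        rw [hf', inner_sub_right]
        have h1 : ⟪q, PQ f⟫_ℂ = ⟪q, f⟫_ℂ := by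
          rw [← ContinuousLinearMap.adjoint_inner_left PQ f q,
            P_adj (PQ := PQ) hPQsa, P_fix 𝒬 PQ hPQidem hPQrange hq']
        rw [h1, sub_self]
      · intro j g'
        rw [hf', slice_sub]
        exact Submodule.sub_mem _ (hq j g')
          (slice_mem_QJ 𝒬 j g' _ (P_mem 𝒬 PQ hPQrange f))
    have hzero : f' = 0 := by
      apply lp.ext
      funext k
      have hn0 : 0 < n := by omega
      have hsl : slice ⟨0, hn0⟩ k f' = 0 := by
        have hperp := slice_perp S hS 𝒬 h𝒬inv ⟨0, hn0⟩ f'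
          (fun x hx => good_perp s hs S hS 𝒬 h𝒬inv PQ hPQsa hPQidem hPQrange hdc
            ⟨0, hn0⟩ x hx f' hgood)
          k (slice ⟨0, hn0⟩ k f') (hgood.2 ⟨0, hn0⟩ k)
        exact inner_self_eq_zero.mp hperp
      have hco : f' k = slice ⟨0, hn0⟩ k f' (k ⟨0, hn0⟩) := by
        rw [slice_apply, Function.update_eq_self]
      rw [hco, hsl]
      rfl
    have hfP : f = PQ f := by
      have := sub_eq_zero.mp (hf' ▸ hzero)
      exact this
    rw [hfP]
    exact P_mem 𝒬 PQ hPQrange f
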